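/- (Lyapunov's theorem for semiflows.) Let K be a compact subset of ℝ^k, let x₀ be a point in the topological interior of K, and let φ : [0,∞) × K → K be a continuous map satisfying φ(0,x) = x and φ(t+s, x) = φ(t, φ(s,x)) for all t, s ≥ 0 and x ∈ K. Assume there is a continuous function L : K → ℝ such that for every x ∈ K with x ≠ x₀, the map t ↦ L(φ(t,x)) is strictly decreasing on [0,∞). Then: (a) φ(t, x₀) = x₀ for all t ≥ 0 (x₀ is a stationary point, and the only one in K); (b) L(x) > L(x₀) for every x ∈ K with x ≠ x₀ (L attains its infimum on K at x₀ only); and (c) for every x ∈ K, φ(t,x) → x₀ as t → +∞ (x₀ is a global attractor in K). -/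

import Mathlib

open Filter Topology

/-- Lyapunov's theorem for semiflows: let `K ⊆ ℝ^k` be compact, `x₀` an
interior point of `K`, `φ` a continuous semiflow on `K`, and `L` a continuous function
on `K` which is strictly decreasing along every trajectory starting at a point `x ≠ x₀`.
Then (a) `x₀` is a stationary point, and the only one in `K`; (b) `L(x) > L(x₀)` for
every `x ∈ K ∖ {x₀}`; (c) `φ(t,x) → x₀` as `t → ∞` for every `x ∈ K`. -/
theorem stmt15 (k : ℕ) (K : Set (EuclideanSpace ℝ (Fin k))) (hK : IsCompact K)
    (x₀ : EuclideanSpace ℝ (Fin k)) (hx₀ : x₀ ∈ interior K)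
    (φ : ℝ → EuclideanSpace ℝ (Fin k) → EuclideanSpace ℝ (Fin k))
    (hφcont : ContinuousOn (fun q : ℝ × EuclideanSpace ℝ (Fin k) => φ q.1 q.2)
      (Set.Ici (0 : ℝ) ×ˢ K))
    (hφmaps : ∀ t : ℝ, 0 ≤ t → ∀ x ∈ K, φ t x ∈ K)
    (hφzero : ∀ x ∈ K, φ 0 x = x)
    (hφadd : ∀ t : ℝ, 0 ≤ t → ∀ s : ℝ, 0 ≤ s → ∀ x ∈ K, φ (t + s) x = φ t (φ s x))
    (L : EuclideanSpace ℝ (Fin k) → ℝ) (hL : ContinuousOn L K)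
    (hdec : ∀ x ∈ K, x ≠ x₀ → StrictAntiOn (fun t => L (φ t x)) (Set.Ici (0 : ℝ))) :
    (∀ t : ℝ, 0 ≤ t → φ t x₀ = x₀) ∧
    (∀ x ∈ K, (∀ t : ℝ, 0 ≤ t → φ t x = x) → x = x₀) ∧
    (∀ x ∈ K, x ≠ x₀ → L x₀ < L x) ∧
    (∀ x ∈ K, Filter.Tendsto (fun t => φ t x) Filter.atTop (nhds x₀)) := by
  have hx₀K : x₀ ∈ K := interior_subset hx₀
  obtain ⟨xm, hxmK, hxm⟩ := hK.exists_isMinOn ⟨x₀, hx₀K⟩ hL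
  -- the key convergence lemma, for every starting point `x ≠ x₀`
  have conv : ∀ x ∈ K, x ≠ x₀ →
      Filter.Tendsto (fun t => φ t x) Filter.atTop (nhds x₀) := by
    intro x hx hne
    by_contra hnot
    obtain ⟨ε, hε, hfr⟩ : ∃ ε > 0, ∃ᶠ t in atTop, ε ≤ dist (φ t x) x₀ := by
      by_contra h
      push_neg at h
      refine hnot (Metric.tendsto_nhds.2 fun ε hε => ?_)
      have := h ε hε
      exact this
    have hsel : ∀ n : ℕ, ∃ t ≥ (n : ℝ), ε ≤ dist (φ t x) x₀ :=
      fun n => (frequently_atTop.mp hfr) n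
    choose t ht hdist using hsel
    have ht0 : ∀ n, (0 : ℝ) ≤ t n := fun n => le_trans (Nat.cast_nonneg n) (ht n)
    have htK : ∀ n, φ (t n) x ∈ K := fun n => hφmaps _ (ht0 n) x hx
    obtain ⟨z, hzK, ψ, hψ, hconv⟩ := hK.tendsto_subseq htK
    have htψ : Tendsto (fun j => t (ψ j)) atTop atTop := by
      refine tendsto_atTop_mono (fun j => ?_) tendsto_natCast_atTop_atTop
      exact le_trans (Nat.cast_le.2 hψ.le_apply) (ht (ψ j))
    have hzx : z ≠ x₀ := by
      have hd : ε ≤ dist z x₀ := by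
        refine ge_of_tendsto (hconv.dist tendsto_const_nhds)
          (Eventually.of_forall fun j => hdist (ψ j))
      intro h
      rw [h, dist_self] at hd
      linarith
    -- the Lyapunov function along the trajectory, made globally antitone
    set f : ℝ → ℝ := fun s => L (φ (max s 0) x) with hf
    have hfeq : ∀ s : ℝ, 0 ≤ s → f s = L (φ s x) := fun s hs => by
      simp [hf, max_eq_left hs]
    have hanti : Antitone f := by
      intro a b hab
      rcases eq_or_lt_of_le (max_le_max_right (0:ℝ) hab) with h | h
      · simp [hf, h]
      · exact (hdec x hx hne (Set.mem_Ici.2 (le_max_right a 0))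
          (Set.mem_Ici.2 (le_max_right b 0)) h).le
    have hbdd : BddBelow (Set.range f) := by
      refine ⟨L xm, ?_⟩
      rintro v ⟨s, rfl⟩
      exact isMinOn_iff.mp hxm _ (hφmaps _ (le_max_right s 0) x hx)
    set c : ℝ := ⨅ s, f s with hc
    have htend : Tendsto f atTop (𝓝 c) := tendsto_atTop_ciInf hanti hbdd
    -- L z = c
    have hseqK : ∀ᶠ j in atTop, φ (t (ψ j)) x ∈ K :=
      Eventually.of_forall fun j => htK (ψ j)
    have hLz : Tendsto (fun j => L (φ (t (ψ j)) x)) atTop (𝓝 (L z)) :=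
      (hL z hzK).tendsto.comp
        (tendsto_nhdsWithin_of_tendsto_nhds_of_eventually_within _ hconv hseqK)
    have hLc : Tendsto (fun j => L (φ (t (ψ j)) x)) atTop (𝓝 c) := by
      have := htend.comp htψ
      refine this.congr fun j => ?_
      exact hfeq _ (ht0 (ψ j))
    have hLzc : L z = c := tendsto_nhds_unique hLz hLc
    -- L (φ 1 z) = c
    have h1z : Tendsto (fun j => φ 1 (φ (t (ψ j)) x)) atTop (𝓝 (φ 1 z)) := by
      have hcw := hφcont (1, z) ⟨Set.mem_Ici.2 zero_le_one, hzK⟩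
      have hpair : Tendsto (fun j => ((1 : ℝ), φ (t (ψ j)) x)) atTop
          (𝓝[Set.Ici (0:ℝ) ×ˢ K] (1, z)) := by
        refine tendsto_nhdsWithin_of_tendsto_nhds_of_eventually_within _
          (tendsto_const_nhds.prodMk_nhds hconv)
          (Eventually.of_forall fun j => ⟨Set.mem_Ici.2 zero_le_one, htK (ψ j)⟩)
      exact hcw.tendsto.comp hpair
    have h1zK : φ 1 z ∈ K := hφmaps 1 zero_le_one z hzK
    have hL1z : Tendsto (fun j => L (φ 1 (φ (t (ψ j)) x))) atTop (𝓝 (L (φ 1 z))) :=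
      (hL _ h1zK).tendsto.comp
        (tendsto_nhdsWithin_of_tendsto_nhds_of_eventually_within _ h1z
          (Eventually.of_forall fun j => hφmaps 1 zero_le_one _ (htK (ψ j))))
    have hL1c : Tendsto (fun j => L (φ 1 (φ (t (ψ j)) x))) atTop (𝓝 c) := by
      have h' : Tendsto (fun j => f (1 + t (ψ j))) atTop (𝓝 c) :=
        htend.comp (tendsto_atTop_add_const_left _ 1 htψ)
      refine h'.congr fun j => ?_
      rw [hfeq _ (by linarith [ht0 (ψ j)]), hφadd 1 zero_le_one _ (ht0 (ψ j)) x hx]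
    have hL1zc : L (φ 1 z) = c := tendsto_nhds_unique hL1z hL1c
    have hlt : L (φ 1 z) < L (φ 0 z) :=
      hdec z hzK hzx (Set.self_mem_Ici) (Set.mem_Ici.2 zero_le_one) zero_lt_one
    rw [hφzero z hzK, hL1zc, hLzc] at hlt
    exact lt_irrefl _ hlt
  -- (a) `x₀` is stationary
  have hstat : ∀ t : ℝ, 0 ≤ t → φ t x₀ = x₀ := by
    intro t₀ ht₀
    by_contra hy
    have hyK : φ t₀ x₀ ∈ K := hφmaps t₀ ht₀ x₀ hx₀K
    have ht₀pos : 0 < t₀ := by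
      rcases ht₀.lt_or_eq with h | h
      · exact h
      · exact absurd (by rw [← h]; exact hφzero x₀ hx₀K) hy
    set y := φ t₀ x₀ with hydef
    have hyconv : Tendsto (fun s => φ s y) atTop (𝓝 x₀) := conv y hyK hy
    have hLy : Tendsto (fun s => L (φ s y)) atTop (𝓝 (L x₀)) :=
      (hL x₀ hx₀K).tendsto.comp
        (tendsto_nhdsWithin_of_tendsto_nhds_of_eventually_within _ hyconv
          (eventually_atTop.2 ⟨0, fun s hs => hφmaps s hs y hyK⟩))
    by_cases hper : ∃ t₁ > 0, φ t₁ x₀ = x₀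
    · obtain ⟨t₁, ht₁, hpt₁⟩ := hper
      have h1 : φ t₁ y = y := by
        rw [hydef, ← hφadd t₁ ht₁.le t₀ ht₀ x₀ hx₀K, add_comm,
          hφadd t₀ ht₀ t₁ ht₁.le x₀ hx₀K, hpt₁]
      have := hdec y hyK hy Set.self_mem_Ici (Set.mem_Ici.2 ht₁.le) ht₁
      simp only [h1, hφzero y hyK] at this
      exact lt_irrefl _ this
    · push_neg at hper
      -- g strictly decreases on (0, ∞), and tends to L x₀ at 0⁺
      have hgdec : ∀ s : ℝ, 0 < s → ∀ u : ℝ, s < u → L (φ u x₀) < L (φ s x₀) := by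
        intro s hs u hu
        have hsK : φ s x₀ ∈ K := hφmaps s hs.le x₀ hx₀K
        have hsne : φ s x₀ ≠ x₀ := hper s hs
        have hus : φ u x₀ = φ (u - s) (φ s x₀) := by
          rw [← hφadd (u - s) (by linarith) s hs.le x₀ hx₀K, sub_add_cancel]
        have := hdec _ hsK hsne Set.self_mem_Ici (Set.mem_Ici.2 (by linarith : (0:ℝ) ≤ u - s))
          (by linarith : (0:ℝ) < u - s)
        simp only [hφzero _ hsK] at this
        rw [hus]
        exact this
      have hg0 : Tendsto (fun s => L (φ s x₀)) (𝓝[>] (0:ℝ)) (𝓝 (L x₀)) := by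
        have hc0 := hφcont (0, x₀) ⟨Set.self_mem_Ici, hx₀K⟩
        have hpair : Tendsto (fun s : ℝ => (s, x₀)) (𝓝[>] (0:ℝ))
            (𝓝[Set.Ici (0:ℝ) ×ˢ K] (0, x₀)) := by
          refine tendsto_nhdsWithin_of_tendsto_nhds_of_eventually_within _
            (((continuous_id.prodMk continuous_const).tendsto 0).mono_left
              nhdsWithin_le_nhds) ?_
          filter_upwards [self_mem_nhdsWithin] with s hs
          exact ⟨Set.mem_Ici.2 (le_of_lt hs), hx₀K⟩
        have hφ0 : Tendsto (fun s : ℝ => φ s x₀) (𝓝[>] (0:ℝ)) (𝓝 x₀) := by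
          have := hc0.tendsto.comp hpair
          simpa [Function.comp_def, hφzero x₀ hx₀K] using this
        refine (hL x₀ hx₀K).tendsto.comp
          (tendsto_nhdsWithin_of_tendsto_nhds_of_eventually_within _ hφ0 ?_)
        filter_upwards [self_mem_nhdsWithin] with s hs
        exact hφmaps s (le_of_lt hs) x₀ hx₀K
      -- hence g(u) ≤ L x₀ for all u > 0
      have hgle : ∀ u : ℝ, 0 < u → L (φ u x₀) ≤ L x₀ := by
        intro u hu
        refine ge_of_tendsto hg0 ?_
        have h1 : ∀ᶠ s in 𝓝[>] (0:ℝ), s < u :=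
          nhdsWithin_le_nhds (eventually_lt_nhds hu)
        filter_upwards [h1, self_mem_nhdsWithin] with s hsu hs
        exact (hgdec s hs u hsu).le
      -- but g(1 + t₀) = L (φ 1 y) > L x₀
      have hkey : L x₀ < L (φ 1 y) := by
        have h21 : L (φ 2 y) < L (φ 1 y) :=
          hdec y hyK hy (Set.mem_Ici.2 zero_le_one) (Set.mem_Ici.2 (by norm_num)) one_lt_two
        have h2 : L x₀ ≤ L (φ 2 y) := by
          refine le_of_tendsto hLy ?_
          filter_upwards [eventually_ge_atTop (2:ℝ)] with s hs
          exact ((hdec y hyK hy).antitoneOn (Set.mem_Ici.2 (by norm_num))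
            (Set.mem_Ici.2 (by linarith)) hs)
        linarith
      have heq : φ (1 + t₀) x₀ = φ 1 y := by
        rw [hφadd 1 zero_le_one t₀ ht₀ x₀ hx₀K, hydef]
      have := hgle (1 + t₀) (by linarith)
      rw [heq] at this
      linarith
  refine ⟨hstat, ?_, ?_, ?_⟩
  · -- uniqueness of the stationary point
    intro x hx hxstat
    by_contra hne
    have := hdec x hx hne Set.self_mem_Ici (Set.mem_Ici.2 zero_le_one) zero_lt_one
    simp only [hxstat 1 zero_le_one, hxstat 0 le_rfl] at this
    exact lt_irrefl _ this
  · -- L attains its minimum only at x₀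
    intro x hx hne
    have hconvx := conv x hx hne
    have hLx : Tendsto (fun s => L (φ s x)) atTop (𝓝 (L x₀)) :=
      (hL x₀ hx₀K).tendsto.comp
        (tendsto_nhdsWithin_of_tendsto_nhds_of_eventually_within _ hconvx
          (eventually_atTop.2 ⟨0, fun s hs => hφmaps s hs x hx⟩))
    have h1 : L x₀ ≤ L (φ 1 x) := by
      refine le_of_tendsto hLx ?_
      filter_upwards [eventually_ge_atTop (1:ℝ)] with s hs
      exact (hdec x hx hne).antitoneOn (Set.mem_Ici.2 zero_le_one)
        (Set.mem_Ici.2 (by linarith)) hs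
    have h2 : L (φ 1 x) < L (φ 0 x) :=
      hdec x hx hne Set.self_mem_Ici (Set.mem_Ici.2 zero_le_one) zero_lt_one
    rw [hφzero x hx] at h2
    linarith
  · -- global attraction
    intro x hx
    by_cases hne : x = x₀
    · subst hne
      refine tendsto_const_nhds.congr' ?_
      filter_upwards [eventually_ge_atTop (0:ℝ)] with s hs
      exact (hstat s hs).symm
    · exact conv x hx hne
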